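/- Let A be an affine domain over ℂ, I ⊆ A an ideal, f ∈ I nonzero, and ∂ a locally nilpotent derivation of A with ∂(f) = 0 and ∂(I) ⊆ I. Then ∂ extends uniquely to a locally nilpotent derivation ∂' of A' = A[I/f]. -/
import Mathlib

section Aux

variable {A : Type*} [CommRing A] [IsDomain A] [Algebra ℂ A]

/-- To prove equality of two localization fractions in a domain, it suffices to
cross-multiply. -/
theorem stmt9_mk_eq {x y : A} {u v : nonZeroDivisors A} (h : (v : A) * x = (u : A) * y) :
    (Localization.mk x u : FractionRing A) = Localization.mk y v :=
  Localization.mk_eq_mk_iff.mpr (Localization.r_iff_exists.mpr ⟨1, by simpa using h⟩)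

theorem stmt9_eq_of_mk {x y : A} {u v : nonZeroDivisors A}
    (h : (Localization.mk x u : FractionRing A) = Localization.mk y v) :
    (v : A) * x = (u : A) * y := by
  obtain ⟨c, hc⟩ := Localization.r_iff_exists.mp (Localization.mk_eq_mk_iff.mp h)
  exact mul_left_cancel₀ (nonZeroDivisors.ne_zero c.2) hc

variable (d : Derivation ℂ A A)

/-- The quotient-rule extension of a derivation to the fraction field, as a bare function. -/
noncomputable def stmt9Dfun : FractionRing A → FractionRing A := fun x =>
  Localization.liftOn x
    (fun a s => (Localization.mk (d a * s - a * d s) (s * s) : FractionRing A))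
    (by
      intro a b s t h
      obtain ⟨c, hc⟩ := Localization.r_iff_exists.mp h
      have E1 : (t : A) * a = (s : A) * b := mul_left_cancel₀ (nonZeroDivisors.ne_zero c.2) hc
      have E2 : (t : A) * d a + a * d (t : A) = (s : A) * d b + b * d (s : A) := by
        have := congrArg d E1
        simpa only [Derivation.leibniz, smul_eq_mul] using this
      apply stmt9_mk_eq
      simp only [Submonoid.coe_mul]
      linear_combination (-(d (s : A) * (t : A) + d (t : A) * (s : A))) * E1
        + ((s : A) * (t : A)) * E2)

theorem stmt9Dfun_mk (a : A) (s : nonZeroDivisors A) :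
    stmt9Dfun d (Localization.mk a s) = Localization.mk (d a * s - a * d s) (s * s) :=
  Localization.liftOn_mk _ _ _ _

/-- The quotient-rule extension of a derivation to the fraction field. -/
noncomputable def stmt9D : Derivation ℂ (FractionRing A) (FractionRing A) where
  toFun := stmt9Dfun d
  map_add' x y := by
    induction x using Localization.induction_on with
    | H x =>
      induction y using Localization.induction_on with
      | H y =>
        obtain ⟨a, s⟩ := x
        obtain ⟨b, t⟩ := y
        rw [Localization.add_mk, stmt9Dfun_mk, stmt9Dfun_mk, stmt9Dfun_mk, Localization.add_mk]
        apply stmt9_mk_eq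
        simp only [Submonoid.coe_mul, map_add, Derivation.leibniz, smul_eq_mul]
        ring
  map_smul' c x := by
    induction x using Localization.induction_on with
    | H x =>
      obtain ⟨a, s⟩ := x
      show stmt9Dfun d (c • Localization.mk a s) = c • stmt9Dfun d (Localization.mk a s)
      rw [Localization.smul_mk, stmt9Dfun_mk, stmt9Dfun_mk, Localization.smul_mk]
      congr 1
      rw [Derivation.map_smul, smul_sub, smul_mul_assoc, smul_mul_assoc]
  map_one_eq_zero' := by
    have h1 : (1 : FractionRing A) = Localization.mk 1 1 := (Localization.mk_self 1).symm
    show stmt9Dfun d 1 = 0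
    rw [h1, stmt9Dfun_mk]
    simp [Derivation.map_one_eq_zero]
  leibniz' x y := by
    induction x using Localization.induction_on with
    | H x =>
      induction y using Localization.induction_on with
      | H y =>
        obtain ⟨a, s⟩ := x
        obtain ⟨b, t⟩ := y
        show stmt9Dfun d (Localization.mk a s * Localization.mk b t)
          = Localization.mk a s • stmt9Dfun d (Localization.mk b t)
            + Localization.mk b t • stmt9Dfun d (Localization.mk a s)
        rw [Localization.mk_mul, stmt9Dfun_mk, stmt9Dfun_mk, stmt9Dfun_mk, smul_eq_mul,
          smul_eq_mul, Localization.mk_mul, Localization.mk_mul, Localization.add_mk]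
        apply stmt9_mk_eq
        simp only [Submonoid.coe_mul, Derivation.leibniz, smul_eq_mul]
        ring

theorem stmt9D_apply (x : FractionRing A) : stmt9D d x = stmt9Dfun d x := rfl

theorem stmt9D_algebraMap (a : A) :
    stmt9D d (algebraMap A (FractionRing A) a) = algebraMap A (FractionRing A) (d a) := by
  rw [← Localization.mk_one_eq_algebraMap, ← Localization.mk_one_eq_algebraMap,
    stmt9D_apply, stmt9Dfun_mk]
  apply stmt9_mk_eq
  simp [Derivation.map_one_eq_zero]

end Aux
set_option maxHeartbeats 1000000 in
set_option synthInstance.maxHeartbeats 1000000 in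
/-- Lifting locally nilpotent derivations to an affine modification: a locally
nilpotent derivation `∂` of `A` with `∂ f = 0` and `∂ I ⊆ I` extends uniquely to a
locally nilpotent derivation of `A' = A[I/f]`. -/
theorem stmt_9 {A : Type*} [CommRing A] [IsDomain A] [Algebra ℂ A]
    [NoZeroSMulDivisors ℂ A] (hA : Algebra.FiniteType ℂ A)
    (I : Ideal A) (f : A) (hfI : f ∈ I) (hf0 : f ≠ 0)
    (d : Derivation ℂ A A) (hnil : ∀ a : A, ∃ n : ℕ, (fun x => d x)^[n] a = 0)
    (hdf : d f = 0) (hdI : ∀ a ∈ I, d a ∈ I) :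
    letI K := FractionRing A
    letI A' : Subalgebra A K :=
      Algebra.adjoin A ((fun a => algebraMap A K a / algebraMap A K f) '' (I : Set A))
    ∃! dd : Derivation ℂ A' A',
      (∀ a : A,
        dd ⟨algebraMap A K a, Subalgebra.algebraMap_mem _ a⟩ =
          ⟨algebraMap A K (d a), Subalgebra.algebraMap_mem _ (d a)⟩) ∧
      (∀ x : A', ∃ n : ℕ, (fun y => dd y)^[n] x = 0) := by
  set K := FractionRing A with hKdef
  set A' : Subalgebra A K :=
    Algebra.adjoin A ((fun a => algebraMap A K a / algebraMap A K f) '' (I : Set A)) with hA'def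
  have hfA0 : f ∈ nonZeroDivisors A := mem_nonZeroDivisors_of_ne_zero hf0
  set fS : nonZeroDivisors A := ⟨f, hfA0⟩ with hfSdef
  set F : ℕ → nonZeroDivisors A := fun k => ⟨f ^ k, pow_mem hfA0 k⟩ with hFdef
  have hf' : algebraMap A K f ≠ 0 := fun h =>
    hf0 (IsFractionRing.injective A K (h.trans (map_zero _).symm))
  have hdiv : ∀ a : A, algebraMap A K a / algebraMap A K f = Localization.mk a fS := by
    intro a
    rw [div_eq_iff hf', ← Localization.mk_one_eq_algebraMap,
      ← Localization.mk_one_eq_algebraMap, Localization.mk_mul]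
    apply stmt9_mk_eq
    simp only [Submonoid.coe_mul, OneMemClass.coe_one]
    show f * 1 * a = 1 * (a * f)
    ring
  have hDgen : ∀ a : A, stmt9D d (Localization.mk a fS) = Localization.mk (d a) fS := by
    intro a
    rw [stmt9D_apply, stmt9Dfun_mk]
    apply stmt9_mk_eq
    show f * (d a * f - a * d f) = ↑(fS * fS) * d a
    rw [hdf]
    simp only [Submonoid.coe_mul]
    show f * (d a * f - a * 0) = f * f * d a
    ring
  -- D preserves A'
  have hmem : ∀ y ∈ A', stmt9D d y ∈ A' := by
    intro y hy
    induction hy using Algebra.adjoin_induction with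
    | mem x hx =>
      obtain ⟨a, haI, rfl⟩ := hx
      beta_reduce
      rw [hdiv a, hDgen, ← hdiv (d a)]
      exact Algebra.subset_adjoin ⟨d a, hdI a haI, rfl⟩
    | algebraMap r =>
      rw [stmt9D_algebraMap]
      exact A'.algebraMap_mem (d r)
    | add x y hx hy ihx ihy =>
      rw [map_add]
      exact add_mem ihx ihy
    | mul x y hx hy ihx ihy =>
      rw [Derivation.leibniz, smul_eq_mul, smul_eq_mul]
      exact add_mem (mul_mem hx ihy) (mul_mem hy ihx)
  -- the restricted derivation
  let dd : Derivation ℂ A' A' :=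
    { toFun := fun x => (⟨stmt9D d (x : K), hmem _ x.2⟩ : A')
      map_add' := fun x y => Subtype.ext (by
        show stmt9D d ((x : K) + (y : K)) = stmt9D d (x : K) + stmt9D d (y : K)
        rw [map_add])
      map_smul' := fun c x => Subtype.ext (by
        show stmt9D d (c • (x : K)) = c • stmt9D d (x : K)
        rw [Derivation.map_smul])
      map_one_eq_zero' := Subtype.ext (by
        show stmt9D d ((1 : A') : K) = ((0 : A') : K)
        rw [OneMemClass.coe_one, Derivation.map_one_eq_zero, ZeroMemClass.coe_zero])
      leibniz' := fun x y => Subtype.ext (by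
        show stmt9D d ((x : K) * (y : K)) =
          (x : K) * stmt9D d (y : K) + (y : K) * stmt9D d (x : K)
        rw [Derivation.leibniz, smul_eq_mul, smul_eq_mul]) }
  have hext : ∀ a : A,
      dd ⟨algebraMap A K a, Subalgebra.algebraMap_mem _ a⟩ =
        ⟨algebraMap A K (d a), Subalgebra.algebraMap_mem _ (d a)⟩ :=
    fun a => Subtype.ext (stmt9D_algebraMap d a)
  -- representation of elements of A'
  have rep : ∀ y (_ : y ∈ A'), ∃ (k : ℕ) (a : A), a ∈ I ^ k ∧ y = Localization.mk a (F k) := by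
    intro y hy
    induction hy using Algebra.adjoin_induction with
    | mem x hx =>
      obtain ⟨a, haI, rfl⟩ := hx
      refine ⟨1, a, by simpa [pow_one] using haI, ?_⟩
      beta_reduce
      rw [hdiv a]
      apply stmt9_mk_eq
      show f ^ 1 * a = f * a
      rw [pow_one]
    | algebraMap r =>
      refine ⟨0, r, by simp [Ideal.one_eq_top], ?_⟩
      rw [← Localization.mk_one_eq_algebraMap]
      apply stmt9_mk_eq
      show f ^ 0 * r = 1 * r
      rw [pow_zero]
    | add x y hx hy ihx ihy =>
      obtain ⟨k1, a1, ha1, rfl⟩ := ihx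
      obtain ⟨k2, a2, ha2, rfl⟩ := ihy
      refine ⟨k1 + k2, f ^ k1 * a2 + f ^ k2 * a1, ?_, ?_⟩
      · have h1 : f ^ k1 * a2 ∈ I ^ (k1 + k2) := by
          rw [pow_add]
          exact Ideal.mul_mem_mul (Ideal.pow_mem_pow hfI k1) ha2
        have h2 : f ^ k2 * a1 ∈ I ^ (k1 + k2) := by
          rw [add_comm, pow_add]
          exact Ideal.mul_mem_mul (Ideal.pow_mem_pow hfI k2) ha1
        exact add_mem h1 h2
      · rw [Localization.add_mk]
        apply stmt9_mk_eq
        show f ^ (k1 + k2) * (f ^ k1 * a2 + f ^ k2 * a1) =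
          ↑(F k1 * F k2) * (f ^ k1 * a2 + f ^ k2 * a1)
        simp only [Submonoid.coe_mul]
        show f ^ (k1 + k2) * (f ^ k1 * a2 + f ^ k2 * a1) =
          f ^ k1 * f ^ k2 * (f ^ k1 * a2 + f ^ k2 * a1)
        rw [pow_add]
    | mul x y hx hy ihx ihy =>
      obtain ⟨k1, a1, ha1, rfl⟩ := ihx
      obtain ⟨k2, a2, ha2, rfl⟩ := ihy
      refine ⟨k1 + k2, a1 * a2, by rw [pow_add]; exact Ideal.mul_mem_mul ha1 ha2, ?_⟩
      rw [Localization.mk_mul]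
      apply stmt9_mk_eq
      show f ^ (k1 + k2) * (a1 * a2) = ↑(F k1 * F k2) * (a1 * a2)
      simp only [Submonoid.coe_mul]
      show f ^ (k1 + k2) * (a1 * a2) = f ^ k1 * f ^ k2 * (a1 * a2)
      rw [pow_add]
  -- iteration formula
  have Dmk : ∀ (k : ℕ) (a : A),
      stmt9Dfun d (Localization.mk a (F k)) = Localization.mk (d a) (F k) := by
    intro k a
    rw [stmt9Dfun_mk]
    have hfk : d ((F k : nonZeroDivisors A) : A) = 0 := by
      show d (f ^ k) = 0
      rw [Derivation.leibniz_pow, hdf]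
      simp
    rw [hfk, mul_zero, sub_zero]
    apply stmt9_mk_eq
    show f ^ k * (d a * f ^ k) = ↑(F k * F k) * d a
    simp only [Submonoid.coe_mul]
    show f ^ k * (d a * f ^ k) = f ^ k * f ^ k * d a
    ring
  have Diter : ∀ (n k : ℕ) (a : A),
      (fun z => stmt9Dfun d z)^[n] (Localization.mk a (F k)) =
        Localization.mk ((fun x => d x)^[n] a) (F k) := by
    intro n
    induction n with
    | zero => intro k a; rfl
    | succ n ih =>
      intro k a
      rw [Function.iterate_succ_apply, Function.iterate_succ_apply]
      rw [Dmk k a]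
      exact ih k (d a)
  have ddIter : ∀ (n : ℕ) (x : A'),
      (((fun y => dd y)^[n] x : A') : K) = (fun z => stmt9Dfun d z)^[n] (x : K) := by
    intro n
    induction n with
    | zero => intro x; rfl
    | succ n ih =>
      intro x
      rw [Function.iterate_succ_apply, Function.iterate_succ_apply]
      exact ih (dd x)
  have hnil' : ∀ x : A', ∃ n : ℕ, (fun y => dd y)^[n] x = 0 := by
    intro x
    obtain ⟨k, a, _, hx⟩ := rep (x : K) x.2
    obtain ⟨n, hn⟩ := hnil a
    refine ⟨n, Subtype.ext ?_⟩
    rw [ZeroMemClass.coe_zero, ddIter n x, hx, Diter n k a, hn, Localization.mk_zero]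
  refine ⟨dd, ⟨hext, hnil'⟩, ?_⟩
  rintro dd2 ⟨hext2, -⟩
  have genlem : ∀ (g : A') (a : A),
      (g : K) = algebraMap A K a / algebraMap A K f → dd2 g = dd g := by
    intro g a hg
    set fel : A' := ⟨algebraMap A K f, Subalgebra.algebraMap_mem _ f⟩ with hfel
    set ael : A' := ⟨algebraMap A K a, Subalgebra.algebraMap_mem _ a⟩ with hael
    have hprod : ael = fel * g := Subtype.ext (by
      show algebraMap A K a = algebraMap A K f * (g : K)
      rw [hg, mul_comm]
      exact (div_mul_cancel₀ _ hf').symm)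
    have hdf2 : dd2 fel = 0 := by
      have h := hext2 f
      rw [hdf] at h
      refine h.trans (Subtype.ext ?_)
      show algebraMap A K (0 : A) = ((0 : A') : K)
      rw [map_zero, ZeroMemClass.coe_zero]
    have hdf1 : dd fel = 0 := by
      have h := hext f
      rw [hdf] at h
      refine h.trans (Subtype.ext ?_)
      show algebraMap A K (0 : A) = ((0 : A') : K)
      rw [map_zero, ZeroMemClass.coe_zero]
    have h2 := congrArg dd2 hprod
    rw [Derivation.leibniz, hdf2, smul_zero, add_zero] at h2
    have h3 := congrArg dd hprod
    rw [Derivation.leibniz, hdf1, smul_zero, add_zero] at h3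
    have h4 : dd2 ael = dd ael := (hext2 a).trans (hext a).symm
    have h5 : fel • dd2 g = fel • dd g := h2.symm.trans (h4.trans h3)
    have h6 : (fel : K) * (dd2 g : K) = (fel : K) * (dd g : K) := by
      have := congrArg (Subtype.val) h5
      simpa [smul_eq_mul] using this
    exact Subtype.ext (mul_left_cancel₀ hf' h6)
  apply Derivation.ext
  rintro ⟨y, hy⟩
  induction hy using Algebra.adjoin_induction with
  | mem x hx =>
    obtain ⟨a, haI, hax⟩ := hx
    exact genlem _ a hax.symm
  | algebraMap r => exact (hext2 r).trans (hext r).symm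
  | add x y hx hy ihx ihy =>
    have e : (⟨x + y, add_mem hx hy⟩ : A') = ⟨x, hx⟩ + ⟨y, hy⟩ := rfl
    rw [e, map_add, map_add, ihx, ihy]
  | mul x y hx hy ihx ihy =>
    have e : (⟨x * y, mul_mem hx hy⟩ : A') = ⟨x, hx⟩ * ⟨y, hy⟩ := rfl
    rw [e, Derivation.leibniz, Derivation.leibniz, ihx, ihy]
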